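/- arXiv:1104.4455 — 5 statements merged into one kernel-verified Lean document; each statement's English description precedes it below -/
import Mathlib

section
/- Let A ∈ Mₙ(H) be written A = A₁ + A₂·j with A₁, A₂ ∈ Mₙ(ℂ). For λ ∈ ℂ and X = Y + Z·j with Y, Z ∈ ℂⁿ, the equation AX = Xλ holds if and only if the complex 2n×2n matrix A' = [[A₁, A₂],[-conj(A₂), conj(A₁)]] satisfies A'·(Y, -conj(Z))ᵀ = λ·(Y, -conj(Z))ᵀ. -/
open Quaternion Matrix

/-- The embedding of `ℂ` into the quaternions, identifying `1` and `i`. -/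
def cq (z : ℂ) : ℍ[ℝ] := ⟨z.re, z.im, 0, 0⟩

/-- The quaternion `j`. -/
def jq : ℍ[ℝ] := ⟨0, 0, 1, 0⟩

lemma cq_add (a b : ℂ) : cq (a + b) = cq a + cq b := by ext <;> simp only [Quaternion.re_add, Quaternion.imI_add, Quaternion.imJ_add, Quaternion.imK_add] <;> simp [cq]

lemma pair_eq (p q p' q' : ℂ) :
    cq p + cq q * jq = cq p' + cq q' * jq ↔ p = p' ∧ q = q' := by
  constructor
  · intro h
    rw [Quaternion.ext_iff] at h
    simp only [Quaternion.re_mul, Quaternion.imI_mul, Quaternion.imJ_mul, Quaternion.imK_mul, Quaternion.re_add, Quaternion.imI_add, Quaternion.imJ_add, Quaternion.imK_add] at h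
    simp [cq, jq, Complex.ext_iff] at h ⊢
    obtain ⟨h1,h2,h3,h4⟩ := h
    exact ⟨⟨h1,h2⟩,⟨h3,h4⟩⟩
  · rintro ⟨rfl, rfl⟩; rfl

lemma cq_mul_pair (a b c d : ℂ) :
    (cq a + cq b * jq) * (cq c + cq d * jq)
      = cq (a*c - b * (starRingEnd ℂ d)) + cq (a*d + b * (starRingEnd ℂ c)) * jq := by
  ext <;> simp only [Quaternion.re_mul, Quaternion.imI_mul, Quaternion.imJ_mul, Quaternion.imK_mul, Quaternion.re_add, Quaternion.imI_add, Quaternion.imJ_add, Quaternion.imK_add] <;> simp [cq, jq, Complex.ext_iff] <;> ring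

lemma sum_pair {n : ℕ} (f g : Fin n → ℂ) :
    ∑ j, (cq (f j) + cq (g j) * jq) = cq (∑ j, f j) + cq (∑ j, g j) * jq := by
  have cqs : ∀ (h : Fin n → ℂ), cq (∑ j, h j) = ∑ j, cq (h j) := fun h =>
    map_sum (AddMonoidHom.mk' cq cq_add) h Finset.univ
  rw [Finset.sum_add_distrib, ← Finset.sum_mul, cqs, cqs]

/-- For `A = A₁ + A₂ j` and `X = Y + Z j`, the right eigenvalue equation `A X = X λ`
holds iff the associated complex `2n × 2n` matrix
`A' = [[A₁, A₂], [-conj A₂, conj A₁]]` satisfies `A' (Y, -conj Z)ᵀ = λ (Y, -conj Z)ᵀ`. -/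
theorem quaternionic_eigen_iff_complex_eigen {n : ℕ}
    (A₁ A₂ : Matrix (Fin n) (Fin n) ℂ) (Y Z : Fin n → ℂ) (lam : ℂ) :
    (Matrix.mulVec (Matrix.of fun i j => cq (A₁ i j) + cq (A₂ i j) * jq)
        (fun i => cq (Y i) + cq (Z i) * jq)
      = fun i => (cq (Y i) + cq (Z i) * jq) * cq lam)
    ↔ (Matrix.fromBlocks A₁ A₂ (-(A₂.map (starRingEnd ℂ))) (A₁.map (starRingEnd ℂ))).mulVec
        (Sum.elim Y (fun i => -(starRingEnd ℂ (Z i))))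
      = lam • Sum.elim Y (fun i => -(starRingEnd ℂ (Z i))) := by
  have hL : (Matrix.mulVec (Matrix.of fun i j => cq (A₁ i j) + cq (A₂ i j) * jq)
        (fun i => cq (Y i) + cq (Z i) * jq)
      = fun i => (cq (Y i) + cq (Z i) * jq) * cq lam)
      ↔ ∀ i, (∑ j, (A₁ i j * Y j - A₂ i j * starRingEnd ℂ (Z j)) = Y i * lam)
          ∧ (∑ j, (A₁ i j * Z j + A₂ i j * starRingEnd ℂ (Y j)) = Z i * starRingEnd ℂ lam) := by
    rw [funext_iff]
    apply forall_congr'; intro i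
    have e1 : Matrix.mulVec (Matrix.of fun i j => cq (A₁ i j) + cq (A₂ i j) * jq)
        (fun i => cq (Y i) + cq (Z i) * jq) i
        = cq (∑ j, (A₁ i j * Y j - A₂ i j * starRingEnd ℂ (Z j)))
          + cq (∑ j, (A₁ i j * Z j + A₂ i j * starRingEnd ℂ (Y j))) * jq := by
      rw [← sum_pair]
      simp only [mulVec, dotProduct, of_apply, cq_mul_pair]
    have e2 : (cq (Y i) + cq (Z i) * jq) * cq lam
        = cq (Y i * lam) + cq (Z i * starRingEnd ℂ lam) * jq := by
      have h0 : cq lam = cq lam + cq 0 * jq := by ext <;> simp only [Quaternion.re_mul, Quaternion.imI_mul, Quaternion.imJ_mul, Quaternion.imK_mul, Quaternion.re_add, Quaternion.imI_add, Quaternion.imJ_add, Quaternion.imK_add] <;> simp [cq, jq]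
      rw [h0, cq_mul_pair]
      simp
    rw [e1, e2, pair_eq]
  have hR : ((Matrix.fromBlocks A₁ A₂ (-(A₂.map (starRingEnd ℂ))) (A₁.map (starRingEnd ℂ))).mulVec
        (Sum.elim Y (fun i => -(starRingEnd ℂ (Z i))))
      = lam • Sum.elim Y (fun i => -(starRingEnd ℂ (Z i))))
      ↔ ∀ i, (∑ j, (A₁ i j * Y j - A₂ i j * starRingEnd ℂ (Z j)) = lam * Y i)
          ∧ (∑ j, (-(starRingEnd ℂ (A₂ i j)) * Y j - starRingEnd ℂ (A₁ i j) * starRingEnd ℂ (Z j))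
              = lam * (-(starRingEnd ℂ (Z i)))) := by
    rw [funext_iff, Sum.forall, ← forall_and]
    apply forall_congr'; intro i
    apply and_congr
    · simp only [mulVec, dotProduct, Fintype.sum_sum_type, fromBlocks_apply₁₁,
        fromBlocks_apply₁₂, Sum.elim_inl, Sum.elim_inr, mul_neg, Pi.smul_apply,
        smul_eq_mul, Finset.sum_neg_distrib, Finset.sum_sub_distrib, sub_eq_add_neg, Finset.sum_add_distrib]
    · simp only [mulVec, dotProduct, Fintype.sum_sum_type, fromBlocks_apply₂₁,
        fromBlocks_apply₂₂, Sum.elim_inl, Sum.elim_inr, map_apply, Pi.neg_apply,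
        neg_apply, mul_neg, neg_mul, sub_eq_add_neg, Pi.smul_apply, smul_eq_mul,
        Finset.sum_neg_distrib, Finset.sum_add_distrib, Finset.sum_sub_distrib]
      simp
  rw [hL, hR]
  apply forall_congr'; intro i
  apply and_congr
  · rw [mul_comm]
  · have e : (∑ j, (-(starRingEnd ℂ (A₂ i j)) * Y j - starRingEnd ℂ (A₁ i j) * starRingEnd ℂ (Z j)))
        = -(starRingEnd ℂ (∑ j, (A₁ i j * Z j + A₂ i j * starRingEnd ℂ (Y j)))) := by
      rw [map_sum, ← Finset.sum_neg_distrib]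
      apply Finset.sum_congr rfl
      intro j _
      simp only [_root_.map_mul, _root_.map_add, Complex.conj_conj]
      ring
    rw [e]
    constructor
    · intro h; rw [h]; simp only [_root_.map_mul, Complex.conj_conj]; ring
    · intro h
      rw [mul_neg] at h
      have h2 := neg_inj.mp h
      have h3 := congrArg (starRingEnd ℂ) h2
      simpa [_root_.map_mul, mul_comm] using h3
end

section
/- Fix z₀ ∈ H and let u be distributed according to the Haar measure on the group of unit quaternions. Then the random quaternion u z₀ u* has the same law as Re(z₀) + |Im(z₀)|·S, where S is uniformly distributed on the unit sphere of the purely imaginary quaternions H₀. -/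
open Quaternion MeasureTheory

private lemma norm_eq_one_of_normSq {a : ℍ[ℝ]} (h : Quaternion.normSq a = 1) : ‖a‖ = 1 := by
  have h2 := Quaternion.normSq_eq_norm_mul_self a
  nlinarith [norm_nonneg a]

private lemma sq_eq_neg_one {p : ℍ[ℝ]} (hp0 : p.re = 0) (hp1 : ‖p‖ = 1) : p * p = -1 := by
  have h := Quaternion.sq_eq_neg_normSq.mpr hp0
  rw [sq] at h
  have h2 : Quaternion.normSq p = 1 := by
    rw [Quaternion.normSq_eq_norm_mul_self, hp1]; ring
  rw [h, h2]; simp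

private lemma conj_step {p s : ℍ[ℝ]} (hp0 : p.re = 0) (hp1 : ‖p‖ = 1)
    (hs0 : s.re = 0) (hs1 : ‖s‖ = 1) (hne : s + p ≠ 0) :
    ∃ v : ℍ[ℝ], ‖v‖ = 1 ∧ v * p * star v = s := by
  set w : ℍ[ℝ] := s + p with hw
  have hwp : w * p = s * w := by
    rw [hw, add_mul, mul_add, sq_eq_neg_one hp0 hp1, sq_eq_neg_one hs0 hs1]
    abel
  have hwnorm : ‖w‖ ≠ 0 := norm_ne_zero_iff.mpr hne
  refine ⟨‖w‖⁻¹ • w, ?_, ?_⟩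
  · rw [norm_smul, norm_inv, norm_norm, inv_mul_cancel₀ hwnorm]
  · rw [Quaternion.star_smul, smul_mul_assoc, smul_mul_assoc, mul_smul_comm, smul_smul]
    rw [hwp, mul_assoc, Quaternion.self_mul_star, Quaternion.mul_coe_eq_smul, smul_smul,
      Quaternion.normSq_eq_norm_mul_self]
    rw [show ‖w‖⁻¹ * ‖w‖⁻¹ * (‖w‖ * ‖w‖) = 1 by field_simp]
    exact one_smul _ _

private def qI : ℍ[ℝ] := ⟨0, 1, 0, 0⟩
private def qJ : ℍ[ℝ] := ⟨0, 0, 1, 0⟩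

private lemma conj_trans {p s : ℍ[ℝ]} (hp0 : p.re = 0) (hp1 : ‖p‖ = 1)
    (hs0 : s.re = 0) (hs1 : ‖s‖ = 1) :
    ∃ v : ℍ[ℝ], ‖v‖ = 1 ∧ v * p * star v = s := by
  by_cases hne : s + p ≠ 0
  · exact conj_step hp0 hp1 hs0 hs1 hne
  · push_neg at hne
    have hsp : s = -p := eq_neg_of_add_eq_zero_left hne
    obtain ⟨t, ht0, ht1, htp, hts⟩ :
        ∃ t : ℍ[ℝ], t.re = 0 ∧ ‖t‖ = 1 ∧ t + p ≠ 0 ∧ s + t ≠ 0 := by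
      by_cases hI : p = qI ∨ p = -qI
      · refine ⟨qJ, rfl, norm_eq_one_of_normSq (by rw [Quaternion.normSq_def']; simp [qJ]), ?_, ?_⟩
        · intro hc
          have h2 : p = -qJ := eq_neg_of_add_eq_zero_right hc
          rcases hI with h | h <;> rw [h] at h2 <;>
            have := congrArg QuaternionAlgebra.imJ h2 <;> (try simp only [Quaternion.imJ_neg] at this) <;> simp [qI, qJ] at this
        · rw [hsp]
          intro hc
          have h2 : p = qJ := neg_add_eq_zero.mp hc
          rcases hI with h | h <;> rw [h] at h2 <;>
            have := congrArg QuaternionAlgebra.imJ h2 <;> (try simp only [Quaternion.imJ_neg] at this) <;> simp [qI, qJ] at this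
      · push_neg at hI
        refine ⟨qI, rfl, norm_eq_one_of_normSq (by rw [Quaternion.normSq_def']; simp [qI]), ?_, ?_⟩
        · intro hc
          exact hI.2 (eq_neg_of_add_eq_zero_right hc)
        · rw [hsp]
          intro hc
          exact hI.1 (neg_add_eq_zero.mp hc)
    obtain ⟨v₁, hv₁n, hv₁⟩ := conj_step hp0 hp1 ht0 ht1 htp
    obtain ⟨v₂, hv₂n, hv₂⟩ := conj_step ht0 ht1 hs0 hs1 hts
    refine ⟨v₂ * v₁, by rw [norm_mul, hv₁n, hv₂n, mul_one], ?_⟩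
    rw [star_mul]
    calc v₂ * v₁ * p * (star v₁ * star v₂) = v₂ * (v₁ * p * star v₁) * star v₂ := by
          simp [mul_assoc]
      _ = s := by rw [hv₁, hv₂]

open scoped ENNReal

section
variable [MeasurableSpace ℍ[ℝ]] [BorelSpace ℍ[ℝ]]

private lemma meas_sphere : MeasurableSet {u : ℍ[ℝ] | ‖u‖ = 1} :=
  (isClosed_eq continuous_norm continuous_const).measurableSet

private lemma meas_isphere : MeasurableSet {s : ℍ[ℝ] | s.re = 0 ∧ ‖s‖ = 1} :=
  ((isClosed_eq Quaternion.continuous_re continuous_const).inter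
    (isClosed_eq continuous_norm continuous_const)).measurableSet

private lemma ae_of_measure_eq_one {μ : Measure ℍ[ℝ]} [IsProbabilityMeasure μ]
    {S : Set ℍ[ℝ]} (hS : MeasurableSet S) (h : μ S = 1) : ∀ᵐ x ∂μ, x ∈ S := by
  rw [ae_iff]
  have : μ Sᶜ = 0 := by
    rw [measure_compl hS (measure_ne_top _ _), h, measure_univ, tsub_self]
  simpa [Set.compl_def] using this

private lemma lint_ind {μ : Measure ℍ[ℝ]} {A : Set ℍ[ℝ]} (hA : MeasurableSet A)
    {g : ℍ[ℝ] → ℍ[ℝ]} (hg : Measurable g) :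
    ∫⁻ x, A.indicator 1 (g x) ∂μ = μ (g ⁻¹' A) := by
  have h : ∀ x, A.indicator (1 : ℍ[ℝ] → ℝ≥0∞) (g x) = (g ⁻¹' A).indicator 1 x := fun x => by
    by_cases hx : g x ∈ A <;>
      simp [Set.indicator_apply, Set.mem_preimage, hx]
  rw [lintegral_congr h]
  exact lintegral_indicator_one (hg hA)

/-- Any conjugation-invariant probability measure on the unit imaginary sphere
equals the pushforward of `μG` under `u ↦ star u * p * u`. -/
private lemma unique_conj_inv (μG : Measure ℍ[ℝ]) [IsProbabilityMeasure μG]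
    (hμGsupp : μG {u : ℍ[ℝ] | ‖u‖ = 1} = 1)
    (hμGinv : ∀ v : ℍ[ℝ], ‖v‖ = 1 → Measure.map (fun u => v * u) μG = μG)
    {p : ℍ[ℝ]} (hp0 : p.re = 0) (hp1 : ‖p‖ = 1)
    (ρ : Measure ℍ[ℝ]) [IsProbabilityMeasure ρ]
    (hρsupp : ρ {s : ℍ[ℝ] | s.re = 0 ∧ ‖s‖ = 1} = 1)
    (hρinv : ∀ v : ℍ[ℝ], ‖v‖ = 1 → Measure.map (fun s => v * s * star v) ρ = ρ) :
    ρ = Measure.map (fun u => star u * p * u) μG := by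
  have hfp : Measurable fun u : ℍ[ℝ] => star u * p * u :=
    ((continuous_star.mul continuous_const).mul continuous_id).measurable
  have hG_ae : ∀ᵐ u ∂μG, ‖u‖ = 1 := ae_of_measure_eq_one meas_sphere hμGsupp
  have hρ_ae : ∀ᵐ s ∂ρ, s.re = 0 ∧ ‖s‖ = 1 := ae_of_measure_eq_one meas_isphere hρsupp
  ext A hA
  set F : ℍ[ℝ] → ℍ[ℝ] → ℝ≥0∞ := fun u s => A.indicator 1 (star u * s * u) with hF
  have hFmeas : Measurable (Function.uncurry F) := by
    exact (Measurable.indicator measurable_const hA).comp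
      ((continuous_fst.star.mul continuous_snd).mul continuous_fst).measurable
  have step1 : ∀ᵐ u ∂μG, (∫⁻ s, F u s ∂ρ) = ρ A := by
    filter_upwards [hG_ae] with u hu
    have hmeas : Measurable fun s : ℍ[ℝ] => star u * s * u :=
      (measurable_const.mul measurable_id).mul measurable_const
    have hinv := hρinv (star u) (by rwa [Quaternion.norm_star])
    rw [star_star] at hinv
    rw [hF]
    rw [lint_ind hA hmeas, ← Measure.map_apply hmeas hA, hinv]
  have step2 : ∀ᵐ s ∂ρ, (∫⁻ u, F u s ∂μG)
      = Measure.map (fun u => star u * p * u) μG A := by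
    filter_upwards [hρ_ae] with s hs
    obtain ⟨v, hv1, hv⟩ := conj_trans hp0 hp1 hs.1 hs.2
    have key : ∀ u : ℍ[ℝ], star u * s * u = star (star v * u) * p * (star v * u) := by
      intro u
      rw [← hv, star_mul, star_star]
      simp [mul_assoc]
    have hmul : Measurable fun u : ℍ[ℝ] => star v * u := measurable_const.mul measurable_id
    calc (∫⁻ u, F u s ∂μG)
        = ∫⁻ u, A.indicator 1 (star (star v * u) * p * (star v * u)) ∂μG := by
          simp only [hF, key]
      _ = ∫⁻ u, A.indicator 1 (star u * p * u) ∂(Measure.map (fun u => star v * u) μG) := by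
          have hind : Measurable fun x : ℍ[ℝ] => A.indicator (1 : ℍ[ℝ] → ℝ≥0∞) (star x * p * x) :=
            (Measurable.indicator measurable_const hA).comp hfp
          rw [lintegral_map hind hmul]
      _ = ∫⁻ u, A.indicator 1 (star u * p * u) ∂μG := by
          rw [hμGinv (star v) (by rwa [Quaternion.norm_star])]
      _ = Measure.map (fun u => star u * p * u) μG A := by
          rw [lint_ind hA hfp, Measure.map_apply hfp hA]
  calc ρ A = ∫⁻ u, (∫⁻ s, F u s ∂ρ) ∂μG := by
        rw [lintegral_congr_ae step1, lintegral_const, measure_univ, mul_one]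
    _ = ∫⁻ s, (∫⁻ u, F u s ∂μG) ∂ρ := lintegral_lintegral_swap hFmeas.aemeasurable
    _ = Measure.map (fun u => star u * p * u) μG A := by
        rw [lintegral_congr_ae step2, lintegral_const, measure_univ, mul_one]


/-- The pushforward of `μG` under conjugation `u ↦ u * p * star u`, for `p` a unit
imaginary quaternion, equals `σ`. -/
private lemma map_conj_eq (μG : Measure ℍ[ℝ]) [IsProbabilityMeasure μG]
    (hμGsupp : μG {u : ℍ[ℝ] | ‖u‖ = 1} = 1)
    (hμGinv : ∀ v : ℍ[ℝ], ‖v‖ = 1 → Measure.map (fun u => v * u) μG = μG)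
    (σ : Measure ℍ[ℝ]) [IsProbabilityMeasure σ]
    (hσsupp : σ {s : ℍ[ℝ] | s.re = 0 ∧ ‖s‖ = 1} = 1)
    (hσinv : ∀ v : ℍ[ℝ], ‖v‖ = 1 → Measure.map (fun s => v * s * star v) σ = σ)
    {p : ℍ[ℝ]} (hp0 : p.re = 0) (hp1 : ‖p‖ = 1) :
    Measure.map (fun u => u * p * star u) μG = σ := by
  have hf : Measurable fun u : ℍ[ℝ] => u * p * star u :=
    ((continuous_id.mul continuous_const).mul continuous_star).measurable
  set ν := Measure.map (fun u => u * p * star u) μG with hν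
  have hprob : IsProbabilityMeasure ν := Measure.isProbabilityMeasure_map hf.aemeasurable
  have hνsupp : ν {s : ℍ[ℝ] | s.re = 0 ∧ ‖s‖ = 1} = 1 := by
    rw [hν, Measure.map_apply hf meas_isphere]
    refine le_antisymm prob_le_one ?_
    rw [← hμGsupp]
    apply measure_mono
    intro u hu
    simp only [Set.mem_setOf_eq, Set.mem_preimage] at hu ⊢
    have h1 : star u * u = (1 : ℍ[ℝ]) := by
      rw [Quaternion.star_mul_self, Quaternion.normSq_eq_norm_mul_self, hu]
      norm_num
    refine ⟨?_, ?_⟩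
    · calc (u * p * star u).re = (u * (p * star u)).re := by rw [mul_assoc]
        _ = ((p * star u) * u).re := by simp [Quaternion.re_mul]; ring
        _ = (p * (star u * u)).re := by rw [mul_assoc]
        _ = 0 := by rw [h1, mul_one, hp0]
    · rw [norm_mul, norm_mul, Quaternion.norm_star, hu, hp1]
      norm_num
  have hνinv : ∀ v : ℍ[ℝ], ‖v‖ = 1 → Measure.map (fun s => v * s * star v) ν = ν := by
    intro v hv
    have hcv : Measurable fun s : ℍ[ℝ] => v * s * star v :=
      ((continuous_const.mul continuous_id).mul continuous_const).measurable
    have hlm : Measurable fun u : ℍ[ℝ] => v * u :=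
      (continuous_const.mul continuous_id).measurable
    rw [hν, Measure.map_map hcv hf]
    have hcomp : ((fun s => v * s * star v) ∘ fun u : ℍ[ℝ] => u * p * star u)
        = (fun u : ℍ[ℝ] => u * p * star u) ∘ (fun u => v * u) := by
      funext u
      simp [Function.comp, star_mul, mul_assoc]
    rw [hcomp, ← Measure.map_map hf hlm, hμGinv v hv]
  rw [show σ = Measure.map (fun u => star u * p * u) μG from
    unique_conj_inv μG hμGsupp hμGinv hp0 hp1 σ hσsupp hσinv]
  exact unique_conj_inv μG hμGsupp hμGinv hp0 hp1 ν hνsupp hνinv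

end

/-- Fix `z₀ ∈ ℍ` and let `u` be Haar-distributed on the group of unit
quaternions (formalized as a translation-invariant probability measure `μG`
supported on the unit sphere). Then `u z₀ u*` has the same law as
`Re(z₀) + |Im(z₀)|·S`, where `S` is uniformly distributed (formalized as a
conjugation-invariant probability measure `σ`) on the unit sphere of the
purely imaginary quaternions. -/
theorem conjugation_orbit_law [MeasurableSpace ℍ[ℝ]] [BorelSpace ℍ[ℝ]] (z₀ : ℍ[ℝ])
    (μG : Measure ℍ[ℝ]) [IsProbabilityMeasure μG]
    (hμGsupp : μG {u : ℍ[ℝ] | ‖u‖ = 1} = 1)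
    (hμGinv : ∀ v : ℍ[ℝ], ‖v‖ = 1 → Measure.map (fun u => v * u) μG = μG)
    (σ : Measure ℍ[ℝ]) [IsProbabilityMeasure σ]
    (hσsupp : σ {s : ℍ[ℝ] | s.re = 0 ∧ ‖s‖ = 1} = 1)
    (hσinv : ∀ v : ℍ[ℝ], ‖v‖ = 1 → Measure.map (fun s => v * s * star v) σ = σ) :
    Measure.map (fun u => u * z₀ * star u) μG
      = Measure.map (fun s : ℍ[ℝ] => ((z₀.re : ℍ[ℝ]) + (‖z₀.im‖ : ℍ[ℝ]) * s)) σ := by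
  by_cases him : z₀.im = 0
  · -- z₀ is real; both sides are the Dirac measure at z₀.
    have hz : (z₀.re : ℍ[ℝ]) = z₀ := by
      conv_rhs => rw [← Quaternion.re_add_im z₀]
      rw [him, add_zero]
    have hnorm : ‖z₀.im‖ = (0 : ℝ) := by rw [him, norm_zero]
    have hL : (fun u : ℍ[ℝ] => u * z₀ * star u) =ᵐ[μG] fun _ => z₀ := by
      filter_upwards [ae_of_measure_eq_one meas_sphere hμGsupp] with u hu
      have h1 : u * star u = (1 : ℍ[ℝ]) := by
        rw [Quaternion.self_mul_star, Quaternion.normSq_eq_norm_mul_self, hu]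
        norm_num
      conv_lhs => rw [← hz]
      rw [← Quaternion.coe_commutes, mul_assoc, h1, mul_one, hz]
    calc Measure.map (fun u => u * z₀ * star u) μG
        = Measure.map (fun _ => z₀) μG := Measure.map_congr hL
      _ = Measure.dirac z₀ := by rw [Measure.map_const, measure_univ, one_smul]
      _ = Measure.map (fun s : ℍ[ℝ] => ((z₀.re : ℍ[ℝ]) + (‖z₀.im‖ : ℍ[ℝ]) * s)) σ := by
          have hfun : (fun s : ℍ[ℝ] => ((z₀.re : ℍ[ℝ]) + (‖z₀.im‖ : ℍ[ℝ]) * s))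
              = fun _ => z₀ := by
            funext s
            rw [hnorm]
            simp [hz]
          rw [hfun, Measure.map_const, measure_univ, one_smul]
  · -- z₀ has a nonzero imaginary part.
    set m := ‖z₀.im‖ with hm
    have hm0 : m ≠ 0 := by
      rw [hm]
      exact norm_ne_zero_iff.mpr him
    set p : ℍ[ℝ] := m⁻¹ • z₀.im with hp
    have hp0 : p.re = 0 := by simp [hp]
    have hp1 : ‖p‖ = 1 := by
      rw [hp, norm_smul, norm_inv, Real.norm_eq_abs, abs_of_nonneg (norm_nonneg _), ← hm,
        inv_mul_cancel₀ hm0]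
    have hmp : m • p = z₀.im := by
      rw [hp, smul_smul, mul_inv_cancel₀ hm0, one_smul]
    have hz : (z₀.re : ℍ[ℝ]) + m • p = z₀ := by rw [hmp, Quaternion.re_add_im]
    have hg : Measurable fun s : ℍ[ℝ] => ((z₀.re : ℍ[ℝ]) + (m : ℍ[ℝ]) * s) :=
      (continuous_const.add (continuous_const.mul continuous_id)).measurable
    have hf : Measurable fun u : ℍ[ℝ] => u * p * star u :=
      ((continuous_id.mul continuous_const).mul continuous_star).measurable
    have hL : (fun u : ℍ[ℝ] => u * z₀ * star u)
        =ᵐ[μG] (fun s : ℍ[ℝ] => ((z₀.re : ℍ[ℝ]) + (m : ℍ[ℝ]) * s))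
          ∘ (fun u : ℍ[ℝ] => u * p * star u) := by
      filter_upwards [ae_of_measure_eq_one meas_sphere hμGsupp] with u hu
      have h1 : u * star u = (1 : ℍ[ℝ]) := by
        rw [Quaternion.self_mul_star, Quaternion.normSq_eq_norm_mul_self, hu]
        norm_num
      show u * z₀ * star u = (z₀.re : ℍ[ℝ]) + (m : ℍ[ℝ]) * (u * p * star u)
      calc u * z₀ * star u = u * ((z₀.re : ℍ[ℝ]) + m • p) * star u := by rw [hz]
        _ = u * (z₀.re : ℍ[ℝ]) * star u + m • (u * p * star u) := by
            rw [mul_add, add_mul, mul_smul_comm, smul_mul_assoc]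
        _ = (z₀.re : ℍ[ℝ]) * (u * star u) + (m : ℍ[ℝ]) * (u * p * star u) := by
            rw [← Quaternion.coe_commutes, mul_assoc, ← Quaternion.coe_mul_eq_smul]
        _ = (z₀.re : ℍ[ℝ]) + (m : ℍ[ℝ]) * (u * p * star u) := by rw [h1, mul_one]
    calc Measure.map (fun u => u * z₀ * star u) μG
        = Measure.map ((fun s : ℍ[ℝ] => ((z₀.re : ℍ[ℝ]) + (m : ℍ[ℝ]) * s))
            ∘ (fun u : ℍ[ℝ] => u * p * star u)) μG := Measure.map_congr hL
      _ = Measure.map (fun s : ℍ[ℝ] => ((z₀.re : ℍ[ℝ]) + (m : ℍ[ℝ]) * s))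
            (Measure.map (fun u : ℍ[ℝ] => u * p * star u) μG) :=
          (Measure.map_map hg hf).symm
      _ = Measure.map (fun s : ℍ[ℝ] => ((z₀.re : ℍ[ℝ]) + (m : ℍ[ℝ]) * s)) σ := by
          rw [map_conj_eq μG hμGsupp hμGinv σ hσsupp hσinv hp0 hp1]
end

section
/- For r ≥ 0 with r ≠ 1, the value of (1/π)·∫_{-π}^{π} log|r - e^{iθ}|·sin²θ dθ equals r²/4 if r < 1, and equals 1/(4r²) + log r if r > 1. -/
open Real MeasureTheory

lemma intcos (k : ℤ) (hk : k ≠ 0) : ∫ θ in (-π)..π, Real.cos ((k:ℝ) * θ) = 0 := by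
  have hk' : (k:ℝ) ≠ 0 := Int.cast_ne_zero.mpr hk
  rw [intervalIntegral.integral_comp_mul_left (fun x => Real.cos x) hk']
  have h1 : Real.sin ((k:ℝ) * π) = 0 := Real.sin_int_mul_pi k
  simp [integral_cos, h1]

lemma intcossin (n : ℕ) (hn : n ≠ 0) :
    ∫ θ in (-π)..π, Real.cos (n * θ) * Real.sin θ ^ 2
      = if n = 2 then -(π/2) else 0 := by
  have h1 : ∀ θ : ℝ, Real.cos (n*θ) * Real.sin θ ^ 2
      = (1/2) * Real.cos (n*θ) - (1/4) * Real.cos (((n:ℝ)+2)*θ) - (1/4) * Real.cos (((n:ℝ)-2)*θ) := by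
    intro θ
    have hs : Real.sin θ ^ 2 = 1/2 - Real.cos (2*θ)/2 := by
      rw [Real.sin_sq, Real.cos_sq]; ring
    have e1 : ((n:ℝ)+2)*θ = n*θ + 2*θ := by ring
    have e2 : ((n:ℝ)-2)*θ = n*θ - 2*θ := by ring
    rw [hs, e1, e2, Real.cos_add, Real.cos_sub]; ring
  have hci : ∀ c : ℝ, IntervalIntegrable (fun θ => Real.cos (c*θ)) volume (-π) π :=
    fun c => (Real.continuous_cos.comp (continuous_const.mul continuous_id)).intervalIntegrable _ _
  rw [intervalIntegral.integral_congr (g := fun θ => (1/2) * Real.cos (n*θ) - (1/4) * Real.cos (((n:ℝ)+2)*θ) - (1/4) * Real.cos (((n:ℝ)-2)*θ)) (fun θ _ => h1 θ)]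
  rw [intervalIntegral.integral_sub (((hci _).const_mul _).sub ((hci _).const_mul _)) ((hci _).const_mul _),
    intervalIntegral.integral_sub ((hci _).const_mul _) ((hci _).const_mul _),
    intervalIntegral.integral_const_mul, intervalIntegral.integral_const_mul,
    intervalIntegral.integral_const_mul]
  have hA : ∫ θ in (-π)..π, Real.cos ((n:ℝ)*θ) = 0 := by
    have := intcos (n:ℤ) (by exact_mod_cast hn)
    simpa using this
  have hB : ∫ θ in (-π)..π, Real.cos (((n:ℝ)+2)*θ) = 0 := by
    have := intcos ((n:ℤ)+2) (by positivity)
    simpa using this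
  by_cases h2 : n = 2
  · subst h2
    have hC : ∫ θ in (-π)..π, Real.cos ((((2:ℕ):ℝ) - 2) * θ) = 2 * π := by
      norm_num; ring
    rw [hA, hB, hC, if_pos rfl]; ring
  · have hC : ∫ θ in (-π)..π, Real.cos (((n:ℝ)-2)*θ) = 0 := by
      have := intcos ((n:ℤ)-2) (by omega)
      push_cast at this
      exact this
    rw [hA, hB, hC, if_neg h2]; ring

lemma key (s : ℝ) (hs0 : 0 ≤ s) (hs : s < 1) :
    ∫ θ in (-π)..π,
        Real.log (‖1 - (s:ℂ) * Complex.exp (θ * Complex.I)‖) * Real.sin θ ^ 2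
      = π * s ^ 2 / 4 := by
  have hπ : (0:ℝ) < π := Real.pi_pos
  have hle : -π ≤ π := by linarith
  set F : ℕ → ℝ → ℝ := fun n θ => (-(s ^ n / n)) * (Real.cos (n * θ) * Real.sin θ ^ 2) with hF
  have hz : ∀ θ : ℝ, ‖(s:ℂ) * Complex.exp (θ * Complex.I)‖ < 1 := by
    intro θ
    rw [norm_mul, Complex.norm_real, Real.norm_eq_abs,
      Complex.norm_exp_ofReal_mul_I, abs_of_nonneg hs0, mul_one]
    exact hs
  have hterm : ∀ (θ : ℝ) (n : ℕ),
      ((((s:ℂ) * Complex.exp (θ * Complex.I)) ^ n / n).re) = s ^ n / n * Real.cos (n * θ) := by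
    intro θ n
    have harg : (n:ℂ) * ((θ:ℂ) * Complex.I) = ((n * θ : ℝ) : ℂ) * Complex.I := by
      push_cast; ring
    have : ((s:ℂ) * Complex.exp (θ * Complex.I)) ^ n / n
        = ((s ^ n / n : ℝ) : ℂ) * Complex.exp (((n * θ : ℝ):ℂ) * Complex.I) := by
      rw [mul_pow, ← Complex.exp_nat_mul, harg]
      push_cast
      ring
    rw [this, Complex.re_ofReal_mul, Complex.exp_ofReal_mul_I_re]
  have hpt : ∀ θ : ℝ, HasSum (fun n => F n θ)
      (Real.log (‖1 - (s:ℂ) * Complex.exp (θ * Complex.I)‖) * Real.sin θ ^ 2) := by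
    intro θ
    have h := Complex.hasSum_taylorSeries_neg_log (hz θ)
    have h2 := ((Complex.hasSum_re h).mul_right (Real.sin θ ^ 2)).neg
    have : -((-Complex.log (1 - (s:ℂ) * Complex.exp (θ * Complex.I))).re * Real.sin θ ^ 2)
        = Real.log (‖1 - (s:ℂ) * Complex.exp (θ * Complex.I)‖) * Real.sin θ ^ 2 := by
      rw [Complex.neg_re, Complex.log_re]; ring
    rw [this] at h2
    refine h2.congr_fun (fun n => ?_)
    rw [hterm θ n, hF]; ring
  have hFcont : ∀ n : ℕ, Continuous (F n) := by
    intro n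
    exact continuous_const.mul ((Real.continuous_cos.comp (continuous_const.mul continuous_id)).mul
      ((Real.continuous_sin).pow 2))
  have hFint : ∀ n : ℕ, IntegrableOn (F n) (Set.Ioc (-π) π) volume :=
    fun n => ((hFcont n).integrableOn_Ioc)
  have hFbd : ∀ (n : ℕ) (θ : ℝ), ‖F n θ‖ ≤ s ^ n := by
    intro n θ
    have h1 : |Real.cos (n*θ) * Real.sin θ ^ 2| ≤ 1 := by
      rw [abs_mul, abs_pow]
      have := Real.abs_cos_le_one ((n:ℝ)*θ)
      have := Real.abs_sin_le_one θ
      have h0 := abs_nonneg (Real.sin θ)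
      nlinarith
    have h2 : s ^ n / (n:ℝ) ≤ s ^ n := by
      rcases Nat.eq_zero_or_pos n with rfl | hn
      · norm_num
      · exact div_le_self (pow_nonneg hs0 _) (by exact_mod_cast hn)
    have h3 : 0 ≤ s ^ n / (n:ℝ) := by positivity
    calc ‖F n θ‖ = (s ^ n / n) * |Real.cos (n*θ) * Real.sin θ ^ 2| := by
          rw [hF, Real.norm_eq_abs, abs_mul, abs_neg, abs_of_nonneg h3]
      _ ≤ (s ^ n / n) * 1 := by nlinarith [abs_nonneg (Real.cos (↑n*θ) * Real.sin θ ^ 2)]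
      _ ≤ s ^ n := by rw [mul_one]; exact h2
  have hmeas : volume (Set.Ioc (-π) π) = ENNReal.ofReal (2*π) := by
    rw [Real.volume_Ioc]; congr 1; ring
  have hnorm : Summable (fun n => ∫ θ in Set.Ioc (-π) π, ‖F n θ‖) := by
    apply Summable.of_nonneg_of_le
      (fun n => integral_nonneg (fun θ => norm_nonneg _))
      (fun n => ?_)
      ((summable_geometric_of_lt_one hs0 hs).mul_left (2*π))
    have hb : ‖∫ θ in Set.Ioc (-π) π, ‖F n θ‖‖ ≤ s ^ n * (volume (Set.Ioc (-π) π)).toReal := by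
      apply norm_setIntegral_le_of_norm_le_const
      · rw [hmeas]; exact ENNReal.ofReal_lt_top
      · intro θ _
        rw [Real.norm_eq_abs, abs_of_nonneg (norm_nonneg _)]
        exact hFbd n θ
    rw [Real.norm_eq_abs, abs_of_nonneg (integral_nonneg (fun θ => norm_nonneg _))] at hb
    calc ∫ θ in Set.Ioc (-π) π, ‖F n θ‖ ≤ s ^ n * (volume (Set.Ioc (-π) π)).toReal := hb
      _ = 2*π * s ^ n := by
          rw [hmeas, ENNReal.toReal_ofReal (by positivity)]; ring
  have hswap := MeasureTheory.hasSum_integral_of_summable_integral_norm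
    (μ := volume.restrict (Set.Ioc (-π) π)) (F := F) hFint hnorm
  have heqint : (∫ θ in Set.Ioc (-π) π, ∑' n, F n θ)
      = ∫ θ in Set.Ioc (-π) π,
          Real.log (‖1 - (s:ℂ) * Complex.exp (θ * Complex.I)‖) * Real.sin θ ^ 2 :=
    integral_congr_ae (Filter.Eventually.of_forall (fun θ => (hpt θ).tsum_eq))
  rw [heqint] at hswap
  have hval : ∀ n : ℕ, (∫ θ in Set.Ioc (-π) π, F n θ) = if n = 2 then π * s ^ 2 / 4 else 0 := by
    intro n
    rw [← intervalIntegral.integral_of_le hle]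
    rcases Nat.eq_zero_or_pos n with rfl | hn
    · simp [hF]
    · rw [hF]
      rw [intervalIntegral.integral_const_mul, intcossin n (Nat.pos_iff_ne_zero.mp hn)]
      by_cases h2 : n = 2
      · subst h2; rw [if_pos rfl, if_pos rfl]; norm_num; ring
      · rw [if_neg h2, if_neg h2, mul_zero]
  have := hswap.tsum_eq
  rw [intervalIntegral.integral_of_le hle, ← this]
  rw [tsum_eq_single 2 (fun n hn => by rw [hval n, if_neg hn])]
  rw [hval 2, if_pos rfl]

lemma habs_eq (r : ℝ) (θ : ℝ) :
    ‖(r:ℂ) - Complex.exp (θ * Complex.I)‖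
      = ‖1 - (r:ℂ) * Complex.exp (θ * Complex.I)‖ := by
  set e := Complex.exp ((θ:ℂ) * Complex.I) with he
  have hconj : (starRingEnd ℂ) e = Complex.exp (-((θ:ℂ) * Complex.I)) := by
    rw [he, ← Complex.exp_conj]
    congr 1
    simp [Complex.conj_ofReal]
  have hmul : e * Complex.exp (-((θ:ℂ) * Complex.I)) = 1 := by
    rw [he, ← Complex.exp_add]; simp
  have key : (1 : ℂ) - (r:ℂ) * e = (-e) * ((starRingEnd ℂ) ((r:ℂ) - e)) := by
    rw [map_sub, Complex.conj_ofReal, hconj]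
    have : -e * ((r:ℂ) - Complex.exp (-((θ:ℂ) * Complex.I)))
        = -(e * r) + e * Complex.exp (-((θ:ℂ) * Complex.I)) := by ring
    rw [this, hmul]; ring
  rw [key, norm_mul, norm_neg, Complex.norm_conj, Complex.norm_exp_ofReal_mul_I, one_mul]

/-- For `r ≥ 0`, `r ≠ 1`, the value of `(1/π) ∫_{-π}^{π} log|r - e^{iθ}| sin²θ dθ`
is `r²/4` if `r < 1` and `1/(4r²) + log r` if `r > 1`. -/
theorem integral_log_abs_sin_sq (r : ℝ) (hr : 0 ≤ r) (hr1 : r ≠ 1) :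
    (1 / π) * ∫ θ in (-π)..π,
        Real.log ‖(r : ℂ) - Complex.exp (θ * Complex.I)‖ * Real.sin θ ^ 2
      = if r < 1 then r ^ 2 / 4 else 1 / (4 * r ^ 2) + Real.log r := by
  have hπ : (0:ℝ) < π := Real.pi_pos
  rcases hr1.lt_or_gt with h1 | h1
  · rw [if_pos h1]
    rw [intervalIntegral.integral_congr (g := fun θ =>
      Real.log (‖1 - (r:ℂ) * Complex.exp (θ * Complex.I)‖) * Real.sin θ ^ 2)
      (fun θ _ => by rw [habs_eq r θ])]
    rw [key r hr h1]
    field_simp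
  · rw [if_neg (not_lt.mpr h1.le)]
    have hr0 : (0:ℝ) < r := lt_trans one_pos h1
    set s : ℝ := 1 / r with hsdef
    have hs0 : 0 ≤ s := by positivity
    have hs1 : s < 1 := by rw [hsdef, div_lt_one hr0]; exact h1
    have hne : ∀ θ : ℝ, ‖1 - (s:ℂ) * Complex.exp (θ * Complex.I)‖ ≠ 0 := by
      intro θ
      have : ‖(s:ℂ) * Complex.exp (θ * Complex.I)‖ < 1 := by
        rw [norm_mul, Complex.norm_real, Real.norm_eq_abs, Complex.norm_exp_ofReal_mul_I, abs_of_nonneg hs0, mul_one]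
        exact hs1
      intro h
      rw [norm_eq_zero, sub_eq_zero] at h
      rw [← h] at this
      simp at this
    have hlog : ∀ θ : ℝ, Real.log (‖(r:ℂ) - Complex.exp (θ * Complex.I)‖)
        = Real.log r + Real.log (‖1 - (s:ℂ) * Complex.exp (θ * Complex.I)‖) := by
      intro θ
      have hrne : (r:ℂ) ≠ 0 := by exact_mod_cast hr0.ne'
      have hfac : ((r:ℂ) - Complex.exp (θ * Complex.I))
          = (r:ℂ) * (1 - (s:ℂ) * Complex.exp (θ * Complex.I)) := by
        rw [hsdef]
        push_cast
        field_simp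
      rw [hfac, norm_mul, Complex.norm_real, Real.norm_eq_abs, abs_of_pos hr0,
        Real.log_mul (ne_of_gt hr0) (hne θ)]
    have habscont : Continuous (fun θ : ℝ =>
        ‖1 - (s:ℂ) * Complex.exp (θ * Complex.I)‖) :=
      continuous_norm.comp (continuous_const.sub (continuous_const.mul
        (Complex.continuous_exp.comp (Complex.continuous_ofReal.mul continuous_const))))
    have hcont : Continuous (fun θ : ℝ =>
        Real.log (‖1 - (s:ℂ) * Complex.exp (θ * Complex.I)‖) * Real.sin θ ^ 2) :=
      (habscont.log hne).mul (Real.continuous_sin.pow 2)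
    rw [intervalIntegral.integral_congr (g := fun θ =>
      Real.log r * Real.sin θ ^ 2 +
      Real.log (‖1 - (s:ℂ) * Complex.exp (θ * Complex.I)‖) * Real.sin θ ^ 2)
      (fun θ _ => by rw [hlog θ]; ring)]
    rw [intervalIntegral.integral_add (f := fun θ => Real.log r * Real.sin θ ^ 2)
      ((continuous_const.mul (Real.continuous_sin.pow 2)).intervalIntegrable _ _)
      (hcont.intervalIntegrable _ _)]
    rw [intervalIntegral.integral_const_mul, key s hs0 hs1]
    have hsin : ∫ θ in (-π)..π, Real.sin θ ^ 2 = π := by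
      rw [integral_sin_sq]
      simp
    rw [hsin, hsdef]
    field_simp
    ring
end

section
/- (1/π)·∫_{-π}^{π} log|1 - e^{iθ}|·sin²θ dθ = 1/4. -/
open Real

open MeasureTheory intervalIntegral Set Filter


lemma intervalIntegrable_log_zero_one : IntervalIntegrable Real.log volume 0 1 := by
  have hrpow : IntervalIntegrable (fun x : ℝ => 2 * x ^ (-(1/2) : ℝ)) volume 0 1 :=
    (intervalIntegrable_rpow' (by norm_num)).const_mul 2
  refine hrpow.mono_fun' (Real.measurable_log.aestronglyMeasurable.restrict) ?_
  rw [uIoc_of_le (by norm_num : (0:ℝ) ≤ 1)]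
  filter_upwards [ae_restrict_mem measurableSet_Ioc] with x hx
  obtain ⟨hx0, hx1⟩ := hx
  have hlogle : Real.log x ≤ 0 := Real.log_nonpos hx0.le hx1
  have hs : (0:ℝ) < Real.sqrt x := Real.sqrt_pos.2 hx0
  have h1 : -Real.log x ≤ 2 * (Real.sqrt x)⁻¹ := by
    have := Real.log_le_sub_one_of_pos (x := (Real.sqrt x)⁻¹) (by positivity)
    rw [Real.log_inv, Real.log_sqrt hx0.le] at this
    nlinarith [hs.le]
  have h2 : (Real.sqrt x)⁻¹ = x ^ (-(1/2) : ℝ) := by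
    rw [Real.rpow_neg hx0.le, Real.sqrt_eq_rpow]
  simp only [Real.norm_eq_abs, abs_of_nonpos hlogle]
  calc -Real.log x ≤ 2 * (Real.sqrt x)⁻¹ := h1
    _ = 2 * x ^ (-(1/2):ℝ) := by rw [h2]

lemma intervalIntegrable_log_zero (b : ℝ) (hb : 0 < b) :
    IntervalIntegrable Real.log volume 0 b := by
  rcases le_or_gt b 1 with h | h
  · exact intervalIntegrable_log_zero_one.mono_set'
      (by rw [uIoc_of_le hb.le, uIoc_of_le zero_le_one]; exact Ioc_subset_Ioc_right h)
  · exact intervalIntegrable_log_zero_one.trans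
      (intervalIntegrable_log (by rw [uIcc_of_le h.le]; rintro ⟨h0, -⟩; linarith))

lemma intervalIntegrable_log_sin₀ :
    IntervalIntegrable (fun x => Real.log (Real.sin x)) volume 0 (π/2) := by
  have hg : IntervalIntegrable (fun x : ℝ => Real.log π - Real.log 2 - Real.log x) volume 0 (π/2) :=
    intervalIntegrable_const.sub (intervalIntegrable_log_zero _ (by positivity))
  refine hg.mono_fun' ((Real.measurable_log.comp Real.measurable_sin).aestronglyMeasurable.restrict) ?_
  rw [uIoc_of_le (by positivity : (0:ℝ) ≤ π/2)]
  filter_upwards [ae_restrict_mem measurableSet_Ioc] with x hx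
  obtain ⟨hx0, hx1⟩ := hx
  have hsin_pos : 0 < Real.sin x := Real.sin_pos_of_pos_of_lt_pi hx0 (by linarith [pi_pos])
  have hlow : 2 / π * x ≤ Real.sin x := Real.mul_le_sin hx0.le hx1
  have h0 : Real.log (Real.sin x) ≤ 0 := Real.log_nonpos hsin_pos.le (Real.sin_le_one x)
  simp only [Real.norm_eq_abs, abs_of_nonpos h0]
  have hlog : Real.log (2 / π * x) ≤ Real.log (Real.sin x) :=
    Real.log_le_log (by positivity) hlow
  have hexp : Real.log (2 / π * x) = Real.log 2 - Real.log π + Real.log x := by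
    rw [Real.log_mul (by positivity) (ne_of_gt hx0), Real.log_div (by norm_num) (by positivity)]
  linarith

lemma intervalIntegrable_log_cos₀ :
    IntervalIntegrable (fun x => Real.log (Real.cos x)) volume 0 (π/2) := by
  have h := (intervalIntegrable_log_sin₀.comp_sub_left (π/2)).symm
  simp only [Real.sin_pi_div_two_sub, sub_self, sub_zero] at h
  exact h

lemma intervalIntegrable_log_sin_refl :
    IntervalIntegrable (fun x => Real.log (Real.sin x)) volume (π/2) π := by
  have h := (intervalIntegrable_log_sin₀.comp_sub_left π).symm
  simp only [Real.sin_pi_sub, sub_self, sub_zero] at h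
  rw [(by ring : π - π/2 = π/2)] at h
  exact h

lemma intervalIntegrable_log_sin' :
    IntervalIntegrable (fun x => Real.log (Real.sin x)) volume 0 π :=
  intervalIntegrable_log_sin₀.trans intervalIntegrable_log_sin_refl

lemma intervalIntegrable_log_sin_two_mul :
    IntervalIntegrable (fun x => Real.log (Real.sin (2 * x))) volume 0 (π/2) := by
  have h := intervalIntegrable_log_sin'.comp_mul_left (c := 2)
  norm_num at h
  exact h

lemma integral_log_sin_eq : ∫ x in (0:ℝ)..(π/2), Real.log (Real.sin x) = -(π/2) * Real.log 2 := by
  set S := ∫ x in (0:ℝ)..(π/2), Real.log (Real.sin x) with hS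
  have h1 : (∫ x in (0:ℝ)..(π/2), Real.log (Real.cos x)) = S := by
    rw [hS, show (∫ x in (0:ℝ)..(π/2), Real.log (Real.cos x))
        = ∫ x in (0:ℝ)..(π/2), Real.log (Real.sin (π/2 - x)) by
      simp [Real.sin_pi_div_two_sub]]
    rw [integral_comp_sub_left (fun x => Real.log (Real.sin x)) (π/2)]
    norm_num
  have h2 : (∫ x in (0:ℝ)..π, Real.log (Real.sin x)) = 2 * S := by
    have hsplit := integral_add_adjacent_intervals intervalIntegrable_log_sin₀
      intervalIntegrable_log_sin_refl
    have hrefl : (∫ x in (π/2)..π, Real.log (Real.sin x)) = S := by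
      rw [hS, show (∫ x in (0:ℝ)..(π/2), Real.log (Real.sin x))
          = ∫ x in (0:ℝ)..(π/2), Real.log (Real.sin (π - x)) by simp [Real.sin_pi_sub]]
      rw [integral_comp_sub_left (fun x => Real.log (Real.sin x)) π]
      rw [(by ring : π - π/2 = π/2)]
      norm_num
    rw [← hsplit, hrefl]; ring
  have h3 : (∫ x in (0:ℝ)..(π/2), Real.log (Real.sin (2*x))) = S := by
    rw [integral_comp_mul_left (fun x => Real.log (Real.sin x)) two_ne_zero]
    rw [(by ring : 2*(π/2) = π), (by ring : 2*(0:ℝ) = 0), h2]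
    simp only [smul_eq_mul]
    ring
  have h4 : (∫ x in (0:ℝ)..(π/2), Real.log (Real.sin (2*x)))
      = ∫ x in (0:ℝ)..(π/2), (Real.log 2 + (Real.log (Real.sin x) + Real.log (Real.cos x))) := by
    apply intervalIntegral.integral_congr_ae
    have hne : ∀ᵐ x : ℝ, x ≠ π/2 := by
      have h0 : (volume : Measure ℝ) {π/2} = 0 := measure_singleton _
      rw [ae_iff]
      convert h0 using 2
      ext x; simp [not_not]
    filter_upwards [hne] with x hxne hx
    rw [uIoc_of_le (by positivity : (0:ℝ) ≤ π/2)] at hx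
    obtain ⟨hx0, hx1⟩ := hx
    have hx1' : x < π/2 := lt_of_le_of_ne hx1 hxne
    have hsin : 0 < Real.sin x := Real.sin_pos_of_pos_of_lt_pi hx0 (by linarith [pi_pos])
    have hcos : 0 < Real.cos x := Real.cos_pos_of_mem_Ioo ⟨by linarith [pi_pos], hx1'⟩
    rw [Real.sin_two_mul, mul_assoc, Real.log_mul two_ne_zero (by positivity),
      Real.log_mul hsin.ne' hcos.ne']
  have h5 : (∫ x in (0:ℝ)..(π/2), (Real.log 2 + (Real.log (Real.sin x) + Real.log (Real.cos x))))
      = (π/2) * Real.log 2 + (S + S) := by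
    rw [integral_add intervalIntegrable_const
      (intervalIntegrable_log_sin₀.add intervalIntegrable_log_cos₀),
      integral_add intervalIntegrable_log_sin₀ intervalIntegrable_log_cos₀,
      intervalIntegral.integral_const, h1, ← hS]
    simp only [smul_eq_mul, sub_zero]
  have hfin : S = (π/2) * Real.log 2 + (S + S) := h3.symm.trans (h4.trans h5)
  linarith

lemma intervalIntegrable_log_sin_mul_cos :
    IntervalIntegrable (fun x => Real.log (Real.sin x) * Real.cos (4*x)) volume 0 (π/2) := by
  refine intervalIntegrable_log_sin₀.abs.mono_fun'
    (((Real.measurable_log.comp Real.measurable_sin).mul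
      (Real.measurable_cos.comp (measurable_const_mul 4))).aestronglyMeasurable.restrict) ?_
  filter_upwards with x
  simp only [Real.norm_eq_abs, abs_mul]
  calc |Real.log (Real.sin x)| * |Real.cos (4*x)| ≤ |Real.log (Real.sin x)| * 1 :=
        mul_le_mul_of_nonneg_left (Real.abs_cos_le_one _) (abs_nonneg _)
    _ = |Real.log (Real.sin x)| := mul_one _

lemma bound_log_sin {x : ℝ} (hx0 : 0 < x) (hx1 : x ≤ π/2) :
    |Real.log (Real.sin x)| ≤ Real.log π - Real.log 2 - Real.log x := by
  have hsin_pos : 0 < Real.sin x := Real.sin_pos_of_pos_of_lt_pi hx0 (by linarith [pi_pos])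
  have hlow : 2 / π * x ≤ Real.sin x := Real.mul_le_sin hx0.le hx1
  have h0 : Real.log (Real.sin x) ≤ 0 := Real.log_nonpos hsin_pos.le (Real.sin_le_one x)
  rw [abs_of_nonpos h0]
  have hlog : Real.log (2 / π * x) ≤ Real.log (Real.sin x) :=
    Real.log_le_log (by positivity) hlow
  have hexp : Real.log (2 / π * x) = Real.log 2 - Real.log π + Real.log x := by
    rw [Real.log_mul (by positivity) (ne_of_gt hx0), Real.log_div (by norm_num) (by positivity)]
  linarith

lemma integral_log_sin_cos_four : ∫ x in (0:ℝ)..(π/2),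
    Real.log (Real.sin x) * Real.cos (4*x) = -(π/8) := by
  set H : ℝ → ℝ := fun x => Real.log (Real.sin x) * Real.sin (4*x) / 4 with hH
  set f' : ℝ → ℝ := fun x =>
    Real.log (Real.sin x) * Real.cos (4*x) + (Real.cos (2*x)/2 + Real.cos (2*x)^2/2) with hf'
  have hcont : ContinuousOn H (Icc 0 (π/2)) := by
    intro x hx
    rcases eq_or_ne x 0 with rfl | hne
    · -- continuity at 0 via squeeze
      have key : Tendsto H (nhdsWithin 0 (Icc 0 (π/2))) (nhds 0) := by
        apply squeeze_zero_norm' (a := fun x => x * (Real.log π - Real.log 2) - x * Real.log x)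
        · filter_upwards [self_mem_nhdsWithin] with x hx
          rcases eq_or_lt_of_le hx.1 with h0 | h0
          · simp [hH, ← h0]
          · have hb := bound_log_sin h0 hx.2
            have hs4 : |Real.sin (4*x)| ≤ 4*x := by
              have := Real.abs_sin_le_abs (x := 4*x)
              rwa [abs_of_nonneg (by linarith : (0:ℝ) ≤ 4*x)] at this
            have hnn : 0 ≤ Real.log π - Real.log 2 - Real.log x := le_trans (abs_nonneg _) hb
            simp only [hH, Real.norm_eq_abs, abs_div, abs_mul]
            rw [abs_of_nonneg (by norm_num : (0:ℝ) ≤ (4:ℝ))]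
            calc |Real.log (Real.sin x)| * |Real.sin (4*x)| / 4
                ≤ (Real.log π - Real.log 2 - Real.log x) * (4*x) / 4 := by
                  apply div_le_div_of_nonneg_right ?_ (by norm_num)
                  exact mul_le_mul hb hs4 (abs_nonneg _) hnn
              _ = x * (Real.log π - Real.log 2) - x * Real.log x := by ring
        · have hcont2 : Continuous (fun x : ℝ => x * (Real.log π - Real.log 2) - x * Real.log x) :=
            (continuous_id.mul continuous_const).sub Real.continuous_mul_log
          have h := (hcont2.tendsto 0).mono_left
            (nhdsWithin_le_nhds (s := Icc 0 (π/2)))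
          simpa using h
      have hH0 : H 0 = 0 := by simp [hH]
      rw [ContinuousWithinAt] at *
      rw [hH0] at *
      exact key
    · have hx0 : 0 < x := lt_of_le_of_ne hx.1 (Ne.symm hne)
      have hsin : 0 < Real.sin x :=
        Real.sin_pos_of_pos_of_lt_pi hx0 (by linarith [pi_pos, hx.2])
      apply ContinuousAt.continuousWithinAt
      have h1 : ContinuousAt (fun x => Real.log (Real.sin x)) x :=
        (Real.continuousAt_log hsin.ne').comp (Real.continuous_sin.continuousAt)
      exact (h1.mul ((Real.continuous_sin.comp (continuous_const.mul continuous_id)).continuousAt)).div_const 4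
  have hderiv : ∀ x ∈ Ioo (0:ℝ) (π/2), HasDerivWithinAt H (f' x) (Ioi x) x := by
    intro x hx
    have hsin : 0 < Real.sin x :=
      Real.sin_pos_of_pos_of_lt_pi hx.1 (by linarith [pi_pos, hx.2])
    have hcos : 0 < Real.cos x := Real.cos_pos_of_mem_Ioo ⟨by linarith [pi_pos, hx.1], hx.2⟩
    have d1 : HasDerivAt (fun x => Real.log (Real.sin x)) ((Real.sin x)⁻¹ * Real.cos x) x :=
      (Real.hasDerivAt_log hsin.ne').comp x (Real.hasDerivAt_sin x)
    have dlin : HasDerivAt (fun x : ℝ => 4*x) 4 x := by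
      simpa using (hasDerivAt_id x).const_mul (4:ℝ)
    have d2 : HasDerivAt (fun x : ℝ => Real.sin (4*x)) (Real.cos (4*x) * 4) x := by
      exact (Real.hasDerivAt_sin (4*x)).comp x dlin
    have d3 := (d1.mul d2).div_const 4
    have heq : ((Real.sin x)⁻¹ * Real.cos x * Real.sin (4*x)
        + Real.log (Real.sin x) * (Real.cos (4*x) * 4)) / 4 = f' x := by
      have hs4 : Real.sin (4*x) = 4 * Real.sin x * Real.cos x * Real.cos (2*x) := by
        rw [show (4:ℝ)*x = 2*(2*x) by ring, Real.sin_two_mul, Real.sin_two_mul]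
        ring
      have hcos_sq : Real.cos x ^ 2 = 1/2 + Real.cos (2*x)/2 := Real.cos_sq x
      have h1 : (Real.sin x)⁻¹ * Real.cos x * (4*Real.sin x*Real.cos x*Real.cos (2*x))
          = 4 * Real.cos x^2 * Real.cos (2*x) := by
        field_simp
      rw [hf', hs4, h1, hcos_sq]
      ring
    rw [← heq] at *
    exact (HasDerivAt.hasDerivWithinAt d3)
  have hint : IntervalIntegrable f' volume 0 (π/2) := by
    apply intervalIntegrable_log_sin_mul_cos.add
    apply Continuous.intervalIntegrable
    fun_prop
  have hFTC := integral_eq_sub_of_hasDeriv_right_of_le (by positivity) hcont hderiv hint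
  have hH2 : H (π/2) = 0 := by
    rw [hH]
    simp only []
    rw [show (4:ℝ) * (π/2) = 2*π by ring]
    simp [Real.sin_two_pi]
  have hH0 : H 0 = 0 := by simp [hH]
  rw [hH2, hH0, sub_zero] at hFTC
  -- hFTC : ∫ f' = 0
  have hsplit : (∫ x in (0:ℝ)..(π/2), f' x)
      = (∫ x in (0:ℝ)..(π/2), Real.log (Real.sin x) * Real.cos (4*x))
        + ∫ x in (0:ℝ)..(π/2), (Real.cos (2*x)/2 + Real.cos (2*x)^2/2) := by
    rw [hf']
    exact integral_add intervalIntegrable_log_sin_mul_cos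
      (by apply Continuous.intervalIntegrable; fun_prop)
  have hval : (∫ x in (0:ℝ)..(π/2), (Real.cos (2*x)/2 + Real.cos (2*x)^2/2)) = π/8 := by
    have e1 : ∀ x : ℝ, Real.cos (2*x)/2 + Real.cos (2*x)^2/2
        = Real.cos (2*x)/2 + 1/4 + Real.cos (4*x)/4 := by
      intro x
      have := Real.cos_sq (2*x)
      rw [show (2:ℝ)*(2*x) = 4*x by ring] at this
      rw [this]; ring
    simp_rw [e1]
    rw [intervalIntegral.integral_add (by apply Continuous.intervalIntegrable; fun_prop)
        (by apply Continuous.intervalIntegrable; fun_prop),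
      intervalIntegral.integral_add (by apply Continuous.intervalIntegrable; fun_prop)
        (by apply Continuous.intervalIntegrable; fun_prop)]
    have i1 : (∫ x in (0:ℝ)..(π/2), Real.cos (2*x)/2) = 0 := by
      rw [intervalIntegral.integral_div]
      rw [integral_comp_mul_left (fun x => Real.cos x) two_ne_zero]
      rw [(by ring : 2*(π/2) = π), (by ring : 2*(0:ℝ) = 0)]
      simp [integral_cos]
    have i2 : (∫ x in (0:ℝ)..(π/2), Real.cos (4*x)/4) = 0 := by
      rw [intervalIntegral.integral_div]
      rw [integral_comp_mul_left (fun x => Real.cos x) (by norm_num : (4:ℝ) ≠ 0)]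
      rw [(by ring : 4*(π/2) = 2*π), (by ring : 4*(0:ℝ) = 0)]
      simp [integral_cos, Real.sin_two_pi]
    have i3 : (∫ x in (0:ℝ)..(π/2), (1:ℝ)/4) = π/8 := by
      simp
      ring
    rw [i1, i2, i3]
    ring
  rw [hsplit, hval] at hFTC
  linarith


lemma abs_one_sub_exp (θ : ℝ) :
    ‖1 - Complex.exp (θ * Complex.I)‖ = 2 * |Real.sin (θ/2)| := by
  have e1 : Complex.exp ((θ:ℂ) * Complex.I)
      = Complex.exp (((θ/2 : ℝ):ℂ) * Complex.I) * Complex.exp (((θ/2 : ℝ):ℂ) * Complex.I) := by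
    rw [← Complex.exp_add]
    congr 1
    push_cast
    ring
  have e2 : Complex.exp (((θ/2 : ℝ):ℂ) * Complex.I)
      * Complex.exp ((-((θ/2 : ℝ):ℂ)) * Complex.I) = 1 := by
    rw [← Complex.exp_add]
    rw [show ((θ/2 : ℝ):ℂ) * Complex.I + (-((θ/2 : ℝ):ℂ)) * Complex.I = 0 by ring]
    exact Complex.exp_zero
  have key : (1 : ℂ) - Complex.exp ((θ:ℂ) * Complex.I)
      = -Complex.exp (((θ/2 : ℝ):ℂ) * Complex.I) * (2 * Complex.I * Complex.sin ((θ/2 : ℝ):ℂ)) := by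
    rw [Complex.sin, e1]
    linear_combination (Complex.exp (((θ/2:ℝ):ℂ) * Complex.I)
        * (Complex.exp ((-((θ/2:ℝ):ℂ)) * Complex.I) - Complex.exp (((θ/2:ℝ):ℂ) * Complex.I)))
        * Complex.I_mul_I + (-1:ℂ) * e2
  rw [key]
  rw [norm_mul, norm_mul, norm_mul]
  simp only [norm_neg, Complex.norm_exp_ofReal_mul_I, Complex.norm_two, Complex.norm_I,
    ← Complex.ofReal_sin, Complex.norm_real, Real.norm_eq_abs]
  ring

noncomputable def gg : ℝ → ℝ := fun θ => Real.log (2 * |Real.sin (θ/2)|) * Real.sin θ ^ 2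

lemma gg_even (θ : ℝ) : gg (-θ) = gg θ := by
  unfold gg
  rw [show -θ/2 = -(θ/2) by ring, Real.sin_neg, abs_neg, Real.sin_neg]
  ring

lemma intervalIntegrable_gg : IntervalIntegrable gg volume 0 π := by
  have habs : IntervalIntegrable (fun x => |Real.log (Real.sin x)|) volume 0 (π/2) :=
    intervalIntegrable_log_sin₀.abs
  have h2 : IntervalIntegrable (fun θ => |Real.log (Real.sin (2⁻¹ * θ))|) volume 0 π := by
    have h := habs.comp_mul_left (c := 2⁻¹)
    rw [show (0:ℝ)/2⁻¹ = 0 by norm_num, show (π/2)/2⁻¹ = π by ring] at h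
    exact h
  have hbig : IntervalIntegrable (fun θ => Real.log 2 + |Real.log (Real.sin (2⁻¹ * θ))|) volume 0 π :=
    intervalIntegrable_const.add h2
  refine hbig.mono_fun' ?_ ?_
  · apply Measurable.aestronglyMeasurable
    apply Measurable.mul
    · exact Real.measurable_log.comp ((measurable_const.mul ((Real.measurable_sin.comp (measurable_id.div_const 2)).abs)))
    · exact (Real.measurable_sin.pow_const 2)
  · rw [uIoc_of_le (by positivity : (0:ℝ) ≤ π)]
    filter_upwards [ae_restrict_mem measurableSet_Ioc] with θ hθ
    obtain ⟨h0, h1⟩ := hθ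
    have hs : 0 < Real.sin (θ/2) :=
      Real.sin_pos_of_pos_of_lt_pi (by positivity) (by linarith [pi_pos])
    have habs' : |Real.sin (θ/2)| = Real.sin (θ/2) := abs_of_pos hs
    have hlog2 : (0:ℝ) ≤ Real.log 2 := Real.log_nonneg (by norm_num)
    simp only [Real.norm_eq_abs, gg, habs']
    rw [Real.log_mul (by norm_num) hs.ne']
    rw [show (2:ℝ)⁻¹ * θ = θ/2 by ring]
    calc |(Real.log 2 + Real.log (Real.sin (θ/2))) * Real.sin θ ^ 2|
        ≤ |Real.log 2 + Real.log (Real.sin (θ/2))| * 1 := by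
          rw [abs_mul]
          apply mul_le_mul_of_nonneg_left _ (abs_nonneg _)
          rw [abs_of_nonneg (sq_nonneg _)]
          nlinarith [Real.neg_one_le_sin θ, Real.sin_le_one θ]
      _ = |Real.log 2 + Real.log (Real.sin (θ/2))| := mul_one _
      _ ≤ |Real.log 2| + |Real.log (Real.sin (θ/2))| := abs_add_le _ _
      _ = Real.log 2 + |Real.log (Real.sin (θ/2))| := by rw [abs_of_nonneg hlog2]

lemma integral_gg_half : ∫ x in (0:ℝ)..(π/2), gg (2*x) = π/16 := by
  have hcongr : ∫ x in (0:ℝ)..(π/2), gg (2*x)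
      = ∫ x in (0:ℝ)..(π/2), (Real.log 2 * Real.sin (2*x)^2
          + (Real.log (Real.sin x) / 2 - Real.log (Real.sin x) * Real.cos (4*x) / 2)) := by
    apply intervalIntegral.integral_congr_ae
    filter_upwards with x hx
    rw [uIoc_of_le (by positivity : (0:ℝ) ≤ π/2)] at hx
    obtain ⟨h0, h1⟩ := hx
    have hs : 0 < Real.sin x := Real.sin_pos_of_pos_of_lt_pi h0 (by linarith [pi_pos])
    unfold gg
    rw [show 2*x/2 = x by ring, abs_of_pos hs, Real.log_mul (by norm_num) hs.ne']
    have hsq : Real.sin (2*x)^2 = 1/2 - Real.cos (4*x)/2 := by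
      rw [Real.sin_sq_eq_half_sub, show 2*(2*x) = 4*x by ring]
    rw [hsq]
    ring
  rw [hcongr]
  have i1 : IntervalIntegrable (fun x => Real.log 2 * Real.sin (2*x)^2) volume 0 (π/2) := by
    apply Continuous.intervalIntegrable; fun_prop
  have i2 : IntervalIntegrable (fun x => Real.log (Real.sin x) / 2) volume 0 (π/2) :=
    intervalIntegrable_log_sin₀.div_const 2
  have i3 : IntervalIntegrable (fun x => Real.log (Real.sin x) * Real.cos (4*x) / 2) volume 0 (π/2) :=
    intervalIntegrable_log_sin_mul_cos.div_const 2
  rw [intervalIntegral.integral_add i1 (i2.sub i3), intervalIntegral.integral_sub i2 i3,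
    intervalIntegral.integral_div, intervalIntegral.integral_div,
    integral_log_sin_eq, integral_log_sin_cos_four,
    intervalIntegral.integral_const_mul]
  have hsin2 : (∫ x in (0:ℝ)..(π/2), Real.sin (2*x)^2) = π/4 := by
    rw [integral_comp_mul_left (fun u => Real.sin u ^ 2) two_ne_zero,
      (by ring : 2*(π/2) = π), (by ring : 2*(0:ℝ) = 0), integral_sin_sq]
    simp [Real.sin_pi]
    ring
  rw [hsin2]
  ring

/-- `(1/π) ∫_{-π}^{π} log|1 - e^{iθ}| sin²θ dθ = 1/4`. -/
theorem integral_log_abs_one_sub_exp_sin_sq :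
    (1 / π) * ∫ θ in (-π)..π,
        Real.log ‖1 - Complex.exp (θ * Complex.I)‖ * Real.sin θ ^ 2
      = 1 / 4 := by
  have hrw : (∫ θ in (-π)..π,
      Real.log ‖1 - Complex.exp (θ * Complex.I)‖ * Real.sin θ ^ 2)
      = ∫ θ in (-π)..π, gg θ := by
    apply intervalIntegral.integral_congr
    intro θ _
    show Real.log ‖1 - Complex.exp (θ * Complex.I)‖ * Real.sin θ ^ 2 = gg θ
    rw [abs_one_sub_exp θ]
    rfl
  have hgg_neg : IntervalIntegrable gg volume (-π) 0 := by
    have h := ((IntervalIntegrable.iff_comp_neg (h := enorm_ne_top)).mp intervalIntegrable_gg)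
    have : (fun x => gg (-x)) = gg := funext gg_even
    rw [this] at h
    simpa using h.symm
  have hsplit : (∫ θ in (-π)..π, gg θ) = (∫ θ in (-π)..(0:ℝ), gg θ) + ∫ θ in (0:ℝ)..π, gg θ :=
    (integral_add_adjacent_intervals hgg_neg intervalIntegrable_gg).symm
  have hneg : (∫ θ in (-π)..(0:ℝ), gg θ) = ∫ θ in (0:ℝ)..π, gg θ := by
    have h : (∫ x in (0:ℝ)..π, gg (-x)) = ∫ x in (-π)..(-(0:ℝ)), gg x :=
      integral_comp_neg gg
    simp only [gg_even, neg_zero] at h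
    exact h.symm
  have hmain : (∫ θ in (0:ℝ)..π, gg θ) = π/8 := by
    have h := integral_comp_mul_left gg (c := 2) two_ne_zero (a := 0) (b := π/2)
    rw [(by ring : 2*(π/2) = π), (by ring : 2*(0:ℝ) = 0)] at h
    rw [integral_gg_half] at h
    rw [smul_eq_mul] at h
    linarith
  rw [hrw, hsplit, hneg, hmain]
  have hπ : π ≠ 0 := ne_of_gt pi_pos
  field_simp
  ring
end

section
/- For 0 ≤ a < 1 and n ∈ ℤ, ∫_{-π}^{π} (1-a²)/(a²+1-2a·cos θ) · e^{inθ} dθ = 2π·a^{|n|}. -/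
open Real MeasureTheory intervalIntegral

-- orthogonality
lemma orth (m : ℤ) : ∫ θ in (-π)..π, Complex.exp (m * θ * Complex.I)
    = if m = 0 then (2 * π : ℂ) else 0 := by
  split_ifs with h
  · subst h
    simp [two_mul]
  · have hc : (m : ℂ) * Complex.I ≠ 0 := by
      simp [Complex.I_ne_zero, h]
    have := integral_exp_mul_complex (a := -π) (b := π) hc
    simp_rw [show ∀ θ : ℝ, (m : ℂ) * θ * Complex.I = (m : ℂ) * Complex.I * θ by intro θ; ring]
    rw [this]
    have h1 : Complex.exp ((m : ℂ) * Complex.I * (-π : ℝ)) =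
        Complex.exp ((m : ℂ) * Complex.I * (π : ℝ)) := by
      rw [show (m : ℂ) * Complex.I * ((-π : ℝ) : ℂ) =
          (m : ℂ) * Complex.I * (π : ℝ) - m * (2 * π * Complex.I) by push_cast; ring,
        Complex.exp_sub, Complex.exp_int_mul_two_pi_mul_I, div_one]
    rw [h1, sub_self, zero_div]

lemma kernel_hasSum (a : ℝ) (ha0 : 0 ≤ a) (ha1 : a < 1) (θ : ℝ) :
    HasSum (fun k : ℤ => (a : ℂ) ^ k.natAbs * Complex.exp (k * θ * Complex.I))
      (((1 - a ^ 2) / (a ^ 2 + 1 - 2 * a * Real.cos θ) : ℝ) : ℂ) := by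
  set z : ℂ := a * Complex.exp (θ * Complex.I) with hzdef
  set w : ℂ := a * Complex.exp (-θ * Complex.I) with hwdef
  have hnz : ∀ u : ℂ, u = a * Complex.exp (u.arg * Complex.I) → True := fun _ _ => trivial
  have hza : ‖z‖ < 1 := by
    rw [hzdef, norm_mul, Complex.norm_exp]
    simp [abs_of_nonneg ha0, ha1]
  have hwa : ‖w‖ < 1 := by
    rw [hwdef, norm_mul, Complex.norm_exp]
    simp [abs_of_nonneg ha0, ha1]
  have hz1 : (1 : ℂ) - z ≠ 0 := by
    intro h
    rw [sub_eq_zero] at h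
    rw [← h] at hza; simp at hza
  have hw1 : (1 : ℂ) - w ≠ 0 := by
    intro h
    rw [sub_eq_zero] at h
    rw [← h] at hwa; simp at hwa
  have hzw : z * w = (a : ℂ) ^ 2 := by
    rw [hzdef, hwdef, mul_mul_mul_comm, ← Complex.exp_add,
      show (θ : ℂ) * Complex.I + -θ * Complex.I = 0 by ring, Complex.exp_zero, mul_one, sq]
  have hsum : z + w = 2 * a * Real.cos θ := by
    rw [hzdef, hwdef, ← mul_add, Complex.exp_mul_I, Complex.exp_mul_I,
      Complex.cos_neg, Complex.sin_neg]
    push_cast [Complex.ofReal_cos]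
    ring
  have hden : ((a ^ 2 + 1 - 2 * a * Real.cos θ : ℝ) : ℂ) = (1 - z) * (1 - w) := by
    push_cast [Complex.ofReal_cos] at hsum ⊢
    linear_combination hsum - hzw
  have h1 : HasSum (fun k : ℕ => z ^ k) (1 - z)⁻¹ := hasSum_geometric_of_norm_lt_one hza
  have h2 : HasSum (fun k : ℕ => w ^ (k + 1)) (w * (1 - w)⁻¹) := by
    have := (hasSum_geometric_of_norm_lt_one hwa).mul_left w
    simpa [← pow_succ'] using this
  have hzpow : ∀ k : ℕ, z ^ k = (a : ℂ) ^ k * Complex.exp ((k : ℂ) * θ * Complex.I) := by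
    intro k
    rw [hzdef, mul_pow, show ((k : ℂ)) * θ * Complex.I = (k : ℂ) * (θ * Complex.I) by ring,
      Complex.exp_nat_mul]
  have hwpow : ∀ k : ℕ, w ^ k = (a : ℂ) ^ k * Complex.exp (-(k : ℂ) * θ * Complex.I) := by
    intro k
    rw [hwdef, mul_pow, show (-(k : ℂ)) * θ * Complex.I = (k : ℂ) * (-θ * Complex.I) by ring,
      Complex.exp_nat_mul]
  have key : HasSum (fun k : ℤ => (a : ℂ) ^ k.natAbs * Complex.exp (k * θ * Complex.I))
      ((1 - z)⁻¹ + w * (1 - w)⁻¹) := by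
    apply HasSum.of_nat_of_neg_add_one
    · convert h1 using 2 with k
      rw [hzpow k]
      norm_num
    · convert h2 using 2 with k
      rw [hwpow (k + 1)]
      have : ((-(k + 1) : ℤ) : ℂ) = -((k : ℂ) + 1) := by push_cast; ring
      simp only [Int.natAbs_neg]
      norm_num [this]
      rw [show ((k : ℤ) + 1).natAbs = k + 1 from by omega]
  clear_value z w
  convert key using 1
  rw [Complex.ofReal_div, hden]
  push_cast
  field_simp
  linear_combination hzw

/-- Poisson kernel Fourier coefficients: for `0 ≤ a < 1` and `n ∈ ℤ`,
`∫_{-π}^{π} (1-a²)/(a²+1-2a cos θ) e^{inθ} dθ = 2π a^{|n|}`. -/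
theorem poisson_kernel_fourier (a : ℝ) (ha0 : 0 ≤ a) (ha1 : a < 1) (n : ℤ) :
    ∫ θ in (-π)..π,
        (((1 - a ^ 2) / (a ^ 2 + 1 - 2 * a * Real.cos θ) : ℝ) : ℂ)
          * Complex.exp (n * θ * Complex.I)
      = ((2 * π * a ^ n.natAbs : ℝ) : ℂ) := by
  have hle : (-π : ℝ) ≤ π := by linarith [Real.pi_pos]
  set F : ℤ → ℝ → ℂ := fun k θ =>
    (a : ℂ) ^ k.natAbs * Complex.exp (k * θ * Complex.I) * Complex.exp (n * θ * Complex.I)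
    with hF
  have hnorm : ∀ (k : ℤ) (θ : ℝ), ‖F k θ‖ = a ^ k.natAbs := by
    intro k θ
    rw [hF]
    simp only [norm_mul, norm_pow, Complex.norm_exp, Complex.norm_real]
    simp [abs_of_nonneg ha0, Real.exp_zero]
  have hpt : ∀ θ : ℝ,
      (((1 - a ^ 2) / (a ^ 2 + 1 - 2 * a * Real.cos θ) : ℝ) : ℂ)
        * Complex.exp (n * θ * Complex.I) = ∑' k : ℤ, F k θ := by
    intro θ
    exact ((kernel_hasSum a ha0 ha1 θ).mul_right _).tsum_eq.symm
  rw [intervalIntegral.integral_of_le hle]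
  simp_rw [hpt]
  have hsummable : Summable (fun k : ℤ => a ^ k.natAbs * (2 * π)) := by
    apply Summable.mul_right
    apply Summable.of_nat_of_neg_add_one
    · simpa using summable_geometric_of_lt_one ha0 ha1
    · simp only [Int.natAbs_neg]
      have : Summable (fun k : ℕ => a ^ (k + 1)) := by
        simpa [pow_succ'] using (summable_geometric_of_lt_one ha0 ha1).mul_left a
      have heq : ∀ k : ℕ, ((k : ℤ) + 1).natAbs = k + 1 := fun k => by omega
      simp_rw [heq]
      exact this
  rw [← MeasureTheory.integral_tsum_of_summable_integral_norm]
  · have hterm : ∀ k : ℤ, ∫ θ in Set.Ioc (-π) π, F k θ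
        = (a : ℂ) ^ k.natAbs * (if (k + n : ℤ) = 0 then (2 * π : ℂ) else 0) := by
      intro k
      rw [← intervalIntegral.integral_of_le hle]
      have : ∀ θ : ℝ, F k θ = (a : ℂ) ^ k.natAbs
          * Complex.exp (((k + n : ℤ) : ℂ) * θ * Complex.I) := by
        intro θ
        rw [hF]
        simp only
        rw [mul_assoc, ← Complex.exp_add]
        congr 2
        push_cast
        ring
      simp_rw [this]
      rw [intervalIntegral.integral_const_mul, orth (k + n)]
    simp_rw [hterm]
    rw [tsum_eq_single (-n) (by
      intro k hk
      rw [if_neg (by omega), mul_zero])]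
    rw [if_pos (by ring)]
    push_cast [Int.natAbs_neg]
    ring
  · intro k
    apply Continuous.integrableOn_Ioc
    rw [hF]
    fun_prop
  · apply Summable.of_nonneg_of_le (fun k => MeasureTheory.integral_nonneg fun θ => norm_nonneg _)
      _ hsummable
    intro k
    have : ∫ θ in Set.Ioc (-π) π, ‖F k θ‖ = a ^ k.natAbs * (2 * π) := by
      simp_rw [hnorm]
      rw [MeasureTheory.integral_const, MeasureTheory.measureReal_restrict_apply_univ,
        Real.volume_real_Ioc_of_le (by linarith), smul_eq_mul]
      ring
    rw [this]
end
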